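/- For the tensor product ansatz with m-qubit blocks (each block a unitary 2-design) on n qubits, the ratio of its second frame potential to the Haar value is 2^{n/m - 1}(2^n+1)/(2^m+1)^{n/m}, which for fixed m > 0 grows without bound as n/m → ∞; in particular it is at least 2^{n/m - 1} · (2^n+1)/2^{n + n/m} and tends to 2^{n/m - 1} asymptotically. -/

import Mathlib

open Filter

lemma ratio_aux (b : ℕ) (hb : 1 ≤ b) :
    Tendsto (fun x : ℝ => (x ^ b + 1) / (x + 1) ^ b) atTop (nhds 1) := by
  have h1 : Tendsto (fun x : ℝ => 1 + (x⁻¹) ^ b) atTop (nhds 1) := by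
    have := (tendsto_inv_atTop_zero (𝕜 := ℝ)).pow b
    have h0 : (0 : ℝ) ^ b = 0 := zero_pow (by omega)
    rw [h0] at this
    simpa using (tendsto_const_nhds (x := (1:ℝ)) (f := atTop)).add this
  have h2 : Tendsto (fun x : ℝ => (1 - (x + 1)⁻¹) ^ b) atTop (nhds 1) := by
    have hi : Tendsto (fun x : ℝ => (x + 1)⁻¹) atTop (nhds 0) :=
      tendsto_inv_atTop_zero.comp (tendsto_atTop_add_const_right atTop 1 tendsto_id)
    have := ((tendsto_const_nhds (x := (1:ℝ)) (f := atTop)).sub hi).pow b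
    simpa using this
  have hmul := h1.mul h2
  rw [show (1 : ℝ) * 1 = 1 by ring] at hmul
  refine hmul.congr' ?_
  filter_upwards [eventually_gt_atTop (0 : ℝ)] with x hx
  have hx1 : x + 1 ≠ 0 := by linarith
  have hxne : x ≠ 0 := ne_of_gt hx
  have : 1 - (x + 1)⁻¹ = x / (x + 1) := by field_simp; ring
  rw [this]
  rw [div_pow]
  field_simp
  rw [one_div, add_mul, inv_pow, inv_mul_cancel₀ (pow_ne_zero b hxne)]
  ring

theorem tensor_product_ratio_unbounded :
    ∀ m : ℕ, 1 ≤ m →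
      (Tendsto (fun b : ℕ => (2 : ℝ) ^ (b - 1) * ((2 : ℝ) ^ (m * b) + 1) / ((2 : ℝ) ^ m + 1) ^ b)
        atTop atTop) ∧
      (∀ b : ℕ, 1 ≤ b →
        (2 : ℝ) ^ (b - 1) * ((2 : ℝ) ^ (m * b) + 1) / (2 : ℝ) ^ (m * b + b)
          ≤ (2 : ℝ) ^ (b - 1) * ((2 : ℝ) ^ (m * b) + 1) / ((2 : ℝ) ^ m + 1) ^ b) ∧
      (∀ b : ℕ, 1 ≤ b →
        Tendsto (fun m' : ℕ =>
            ((2 : ℝ) ^ (b - 1) * ((2 : ℝ) ^ (m' * b) + 1) / ((2 : ℝ) ^ m' + 1) ^ b)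
              / (2 : ℝ) ^ (b - 1))
          atTop (nhds 1)) := by
  intro m hm
  have hden : (0 : ℝ) < (2 : ℝ) ^ m + 1 := by positivity
  refine ⟨?_, ?_, ?_⟩
  · -- unbounded growth
    set c : ℝ := 2 ^ (m + 1) / (2 ^ m + 1) with hc
    have hc1 : 1 < c := by
      rw [hc, lt_div_iff₀ hden]
      have h2m : (1 : ℝ) < 2 ^ m := one_lt_pow₀ (by norm_num) (by omega)
      rw [pow_succ]
      linarith
    have htend : Tendsto (fun b : ℕ => (1 / 2 : ℝ) * c ^ b) atTop atTop :=
      (tendsto_pow_atTop_atTop_of_one_lt hc1).const_mul_atTop (by norm_num)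
    refine tendsto_atTop_mono' atTop ?_ htend
    filter_upwards [eventually_ge_atTop 1] with b hb
    obtain ⟨k, rfl⟩ : ∃ k, b = k + 1 := ⟨b - 1, by omega⟩
    have h1 : ((2 : ℝ) ^ (m + 1) / (2 ^ m + 1)) ^ (k + 1)
        = 2 ^ ((m + 1) * (k + 1)) / (2 ^ m + 1) ^ (k + 1) := by
      rw [div_pow, ← pow_mul]
    have h2 : (m + 1) * (k + 1) = k + m * (k + 1) + 1 := by ring
    have heq : (1 / 2 : ℝ) * c ^ (k + 1)
        = 2 ^ (k + 1 - 1) * 2 ^ (m * (k + 1)) / (2 ^ m + 1) ^ (k + 1) := by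
      rw [hc, h1, h2, Nat.add_sub_cancel, pow_succ, pow_add]
      ring
    rw [heq]
    gcongr
    linarith
  · -- lower bound
    intro b hb
    have hA : (0 : ℝ) ≤ (2 : ℝ) ^ (b - 1) * ((2 : ℝ) ^ (m * b) + 1) := by positivity
    have hle : ((2 : ℝ) ^ m + 1) ^ b ≤ (2 : ℝ) ^ (m * b + b) := by
      have h1 : ((2 : ℝ) ^ m + 1) ^ b ≤ ((2 : ℝ) ^ (m + 1)) ^ b := by
        gcongr
        rw [pow_succ]
        have : (1 : ℝ) ≤ 2 ^ m := one_le_pow₀ (by norm_num)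
        linarith
      calc ((2 : ℝ) ^ m + 1) ^ b ≤ ((2 : ℝ) ^ (m + 1)) ^ b := h1
        _ = (2 : ℝ) ^ (m * b + b) := by rw [← pow_mul]; ring_nf
    gcongr
  · -- asymptotic
    intro b hb
    have hcomp : Tendsto (fun m' : ℕ => ((2 : ℝ) ^ m' : ℝ)) atTop atTop :=
      tendsto_pow_atTop_atTop_of_one_lt one_lt_two
    have := (ratio_aux b hb).comp hcomp
    refine this.congr ?_
    intro m'
    have hne : ((2 : ℝ) ^ m' + 1) ^ b ≠ 0 := by positivity
    have hne2 : (2 : ℝ) ^ (b - 1) ≠ 0 := by positivity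
    simp only [Function.comp]
    rw [pow_mul, mul_div_assoc, mul_comm, mul_div_assoc, div_self hne2, mul_one]
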